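/- Let d be a TS-metric on F₂ⁿ, r > 0, and B = B_d(0,r). If B has exactly 2 elements, then B = {0, e_i} for some index i ∈ Fin n. -/
import Mathlib


open Set Function

/-- A weight on a binary vector space `ι → ZMod 2`. -/
def IsWeight {ι : Type*} (ω : (ι → ZMod 2) → ℝ) : Prop :=
  (∀ x, 0 ≤ ω x) ∧ (∀ x, ω x = 0 ↔ x = 0) ∧ ∀ x y, ω (x + y) ≤ ω x + ω y

/-- A function respects the support of vectors. -/
def RespectsSupport {ι : Type*} (ω : (ι → ZMod 2) → ℝ) : Prop :=
  ∀ x y : ι → ZMod 2, Function.support x ⊆ Function.support y → ω x ≤ ω y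

/-- A TS-metric: a (translation-invariant) metric determined by a weight
that respects support, i.e. `d x y = ω (x + y)` (note `-y = y` in char 2). -/
def IsTSMetric {ι : Type*} (d : (ι → ZMod 2) → (ι → ZMod 2) → ℝ) : Prop :=
  ∃ ω, IsWeight ω ∧ RespectsSupport ω ∧ ∀ x y, d x y = ω (x + y)

/-- The ball `B_d(x, r)`. -/
def tsBall {ι : Type*} (d : (ι → ZMod 2) → (ι → ZMod 2) → ℝ) (x : ι → ZMod 2) (r : ℝ) :
    Set (ι → ZMod 2) := {y | d x y ≤ r}

/-- `(D, C)` is a tiling: the translates `c + D`, `c ∈ C`, are pairwise disjoint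
and cover the whole space. -/
def IsTiling {ι : Type*} (D C : Set (ι → ZMod 2)) : Prop :=
  (⋃ c ∈ C, (c + ·) '' D) = Set.univ ∧
  C.Pairwise fun c c' => Disjoint ((c + ·) '' D) ((c' + ·) '' D)

/-- `C` is a `(d, r)`-perfect code: the balls of radius `r` centered at codewords
are pairwise disjoint and cover the whole space. -/
def IsPerfectCode {ι : Type*} (d : (ι → ZMod 2) → (ι → ZMod 2) → ℝ) (r : ℝ)
    (C : Set (ι → ZMod 2)) : Prop :=
  (⋃ c ∈ C, tsBall d c r) = Set.univ ∧
  C.Pairwise fun c c' => Disjoint (tsBall d c r) (tsBall d c' r)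

/-- A polyhedromino: any two points of `D` are joined by a geodesic path
(w.r.t. the Hamming distance) lying inside `D`. -/
def IsPolyhedromino {ι : Type*} [Fintype ι] (D : Set (ι → ZMod 2)) : Prop :=
  ∀ x ∈ D, ∀ y ∈ D, ∃ γ : ℕ → (ι → ZMod 2),
    γ 0 = x ∧ γ (hammingDist x y) = y ∧
    (∀ i ≤ hammingDist x y, γ i ∈ D) ∧
    ∀ i < hammingDist x y, hammingDist (γ i) (γ (i + 1)) = 1

/-- A poly-tiling: a tiling whose tile is a polyhedromino. -/
def IsPolyTiling {ι : Type*} [Fintype ι] (D C : Set (ι → ZMod 2)) : Prop :=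
  IsTiling D C ∧ IsPolyhedromino D

/-- The vector `e_i` with support `{i}`. -/
def unitVec {ι : Type*} [DecidableEq ι] (i : ι) : ι → ZMod 2 := Pi.single i 1

/-- The `F`-combinatorial weight: the minimal number of members of `F` needed
to cover the support of `x`. -/
noncomputable def combWeight {ι : Type*} [DecidableEq ι] (F : Finset (Finset ι))
    (x : ι → ZMod 2) : ℕ :=
  sInf {k | ∃ A : Finset (Finset ι), A ⊆ F ∧ A.card = k ∧ Function.support x ⊆ ↑(A.sup id)}

/-- The axioms of a metric. -/
def IsMetric {α : Type*} (d : α → α → ℝ) : Prop :=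
  (∀ x y, d x y = 0 ↔ x = y) ∧ (∀ x y, d x y = d y x) ∧ ∀ x y z, d x z ≤ d x y + d y z

/-- The max-metric on the product (concatenation) space, identified with
functions on `Fin n ⊕ Fin m`. -/
def dmax {n m : ℕ} (d₁ : (Fin n → ZMod 2) → (Fin n → ZMod 2) → ℝ)
    (d₂ : (Fin m → ZMod 2) → (Fin m → ZMod 2) → ℝ)
    (w w' : Fin n ⊕ Fin m → ZMod 2) : ℝ :=
  max (d₁ (fun i => w (Sum.inl i)) (fun i => w' (Sum.inl i)))
      (d₂ (fun j => w (Sum.inr j)) (fun j => w' (Sum.inr j)))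

/-- a TS-ball centered at `0` with exactly 2 elements is `{0, e_i}`. -/
theorem stmt_3 {n : ℕ} (d : (Fin n → ZMod 2) → (Fin n → ZMod 2) → ℝ)
    (hd : IsTSMetric d) (r : ℝ) (hr : 0 < r)
    (h : (tsBall d 0 r).ncard = 2) :
    ∃ i : Fin n, tsBall d 0 r = {0, unitVec i} := by
  obtain ⟨ω, ⟨hpos, hzero, htri⟩, hresp, hdw⟩ := hd
  have hball : ∀ y, y ∈ tsBall d 0 r ↔ ω y ≤ r := by
    intro y; simp [tsBall, hdw, zero_add]
  have h0 : (0 : Fin n → ZMod 2) ∈ tsBall d 0 r := by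
    rw [hball, (hzero 0).mpr rfl]; exact hr.le
  obtain ⟨a, b, hab, hB⟩ := Set.ncard_eq_two.mp h
  -- find the nonzero element x with tsBall = {0, x}
  have hx : ∃ x, x ≠ 0 ∧ tsBall d 0 r = {0, x} := by
    rw [hB] at h0
    rcases h0 with h0 | h0
    · exact ⟨b, by rw [← h0] at hab; exact (Ne.symm hab), by rw [hB, h0]⟩
    · exact ⟨a, by rw [← h0] at hab; exact hab, by
        rw [hB, h0, Set.pair_comm]⟩
  obtain ⟨x, hx0, hBx⟩ := hx
  obtain ⟨i, hi⟩ := Function.ne_iff.mp hx0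
  simp only [Pi.zero_apply] at hi
  refine ⟨i, ?_⟩
  have hsupp : Function.support (unitVec i) ⊆ Function.support x := by
    intro j hj
    have : j = i := by
      by_contra hji
      simp [unitVec, Function.mem_support, Pi.single_apply, hji] at hj
    rwa [this]
  have hxB : x ∈ tsBall d 0 r := by rw [hBx]; right; rfl
  have heB : unitVec i ∈ tsBall d 0 r := by
    rw [hball]
    exact le_trans (hresp _ _ hsupp) ((hball x).mp hxB)
  have hene : unitVec i ≠ 0 := by
    intro hcon
    have : unitVec i i = 0 := by rw [hcon]; rfl
    simp [unitVec, Pi.single_apply] at this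
  have : unitVec i = x := by
    rw [hBx] at heB
    rcases heB with h' | h'
    · exact absurd h' hene
    · exact h'
  rw [hBx, this]
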